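/- There exists γ ∈ (0,1) such that for any two distinct dyadic rectangles R ≠ R' in [0,1)², the associated points z_R, z_{R'} ∈ 𝔻² satisfy |⟨g_{z_R}, g_{z_{R'}}⟩|² ≤ 1-γ². In particular, the collection {z_R : R dyadic rectangle} is weakly separated with a uniform constant. -/

import Mathlib

open MeasureTheory Complex
open scoped BigOperators ENNReal

noncomputable section

/-- The open unit polydisc `𝔻^d ⊆ ℂ^d`. -/
def polydisc (d : ℕ) : Set (Fin d → ℂ) := {z | ∀ i, ‖z i‖ < 1}

/-- The weight `∏_{i=1}^d (1 - |z^i|²)`. -/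
def wt (d : ℕ) (z : Fin d → ℂ) : ℝ := ∏ i, (1 - ‖z i‖ ^ 2)

/-- The point `(e^{2πiθ_1}, …, e^{2πiθ_d})` of the torus `𝕋^d`. -/
def bd (d : ℕ) (θ : Fin d → ℝ) : Fin d → ℂ :=
  fun i => Complex.exp (((2 * Real.pi * θ i : ℝ) : ℂ) * Complex.I)

/-- The fundamental domain `[0,1)^d` parametrizing `𝕋^d`. -/
def cube (d : ℕ) : Set (Fin d → ℝ) := Set.univ.pi fun _ => Set.Ico (0 : ℝ) 1


/-- The modulus of the inner product of normalized Szegő kernels: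
`|⟨g_z, g_w⟩| = ∏_i √((1-|z^i|²)(1-|w^i|²)) / |1 - conj(z^i) w^i|`. -/
def gInnerAbs (d : ℕ) (z w : Fin d → ℂ) : ℝ :=
  ∏ i, Real.sqrt ((1 - ‖z i‖ ^ 2) * (1 - ‖w i‖ ^ 2)) /
    ‖1 - (starRingEnd ℂ) (z i) * w i‖

/-- The point `z_R ∈ 𝔻²` associated to the dyadic rectangle
`R = [j₁/2^N₁, (j₁+1)/2^N₁) × [j₂/2^N₂, (j₂+1)/2^N₂)`:
`z_R = (√(1-|I|) e^{2πiθ₁}, √(1-|J|) e^{2πiθ₂})` with `θ₁, θ₂` the midpoints. -/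
def zRect (N₁ j₁ N₂ j₂ : ℕ) : Fin 2 → ℂ :=
  ![(Real.sqrt (1 - (2 : ℝ)⁻¹ ^ N₁) : ℂ) *
      Complex.exp (((2 * Real.pi * (((j₁ : ℝ) + 1 / 2) / 2 ^ N₁) : ℝ) : ℂ) * Complex.I),
    (Real.sqrt (1 - (2 : ℝ)⁻¹ ^ N₂) : ℂ) *
      Complex.exp (((2 * Real.pi * (((j₂ : ℝ) + 1 / 2) / 2 ^ N₂) : ℝ) : ℂ) * Complex.I)]


def zc (N j : ℕ) : ℂ :=
  (Real.sqrt (1 - (2 : ℝ)⁻¹ ^ N) : ℂ) *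
    Complex.exp (((2 * Real.pi * (((j : ℝ) + 1 / 2) / 2 ^ N) : ℝ) : ℂ) * Complex.I)

lemma u_pos (N : ℕ) : (0:ℝ) < (2:ℝ)⁻¹ ^ N := by positivity

lemma u_le_one (N : ℕ) : (2:ℝ)⁻¹ ^ N ≤ 1 := pow_le_one₀ (by norm_num) (by norm_num)

lemma abs_zc (N j : ℕ) : ‖zc N j‖ = Real.sqrt (1 - (2:ℝ)⁻¹ ^ N) := by
  unfold zc
  rw [norm_mul, Complex.norm_real, Complex.norm_exp_ofReal_mul_I, mul_one,
    Real.norm_of_nonneg (Real.sqrt_nonneg _)]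

lemma one_sub_abs_zc_sq (N j : ℕ) : 1 - ‖zc N j‖ ^ 2 = (2:ℝ)⁻¹ ^ N := by
  rw [abs_zc, Real.sq_sqrt (by linarith [u_le_one N])]
  ring

lemma conj_zc_mul (N j N' j' : ℕ) :
    (starRingEnd ℂ) (zc N j) * zc N' j' =
      ((Real.sqrt (1 - (2:ℝ)⁻¹ ^ N) * Real.sqrt (1 - (2:ℝ)⁻¹ ^ N') : ℝ) : ℂ) *
        Complex.exp (((2 * Real.pi * ((((j' : ℝ) + 1 / 2) / 2 ^ N') - (((j : ℝ) + 1 / 2) / 2 ^ N)) : ℝ) : ℂ) * Complex.I) := by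
  unfold zc
  rw [map_mul, Complex.conj_ofReal, ← Complex.exp_conj]
  rw [map_mul, Complex.conj_ofReal, Complex.conj_I]
  push_cast
  rw [mul_mul_mul_comm, ← Complex.exp_add]
  ring_nf

lemma abs_one_sub_sq (ρ φ : ℝ) :
    ‖1 - (ρ:ℂ) * Complex.exp ((φ:ℂ) * Complex.I)‖ ^ 2
      = 1 - 2 * ρ * Real.cos φ + ρ ^ 2 := by
  rw [Complex.sq_norm, Complex.normSq_apply]
  simp [Complex.sub_re, Complex.sub_im, Complex.mul_re, Complex.mul_im,
    Complex.exp_ofReal_mul_I_re, Complex.exp_ofReal_mul_I_im]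
  nlinarith [Real.sin_sq_add_cos_sq φ]

def fac (N j N' j' : ℕ) : ℝ :=
  Real.sqrt ((1 - ‖zc N j‖ ^ 2) * (1 - ‖zc N' j'‖ ^ 2)) /
    ‖1 - (starRingEnd ℂ) (zc N j) * zc N' j'‖

lemma fac_sq_eq (N j N' j' : ℕ) :
    fac N j N' j' ^ 2 =
      ((2:ℝ)⁻¹ ^ N * (2:ℝ)⁻¹ ^ N') /
        (1 - 2 * (Real.sqrt (1 - (2:ℝ)⁻¹ ^ N) * Real.sqrt (1 - (2:ℝ)⁻¹ ^ N')) *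
            Real.cos (2 * Real.pi * ((((j':ℝ) + 1/2) / 2 ^ N') - (((j:ℝ) + 1/2) / 2 ^ N)))
          + (Real.sqrt (1 - (2:ℝ)⁻¹ ^ N) * Real.sqrt (1 - (2:ℝ)⁻¹ ^ N')) ^ 2) := by
  unfold fac
  rw [div_pow, one_sub_abs_zc_sq, one_sub_abs_zc_sq, conj_zc_mul, abs_one_sub_sq,
    Real.sq_sqrt (by positivity)]

lemma aux_D (u u' c : ℝ) (hu : 0 < u) (hu1 : u ≤ 1) (hu' : 0 < u') (hu1' : u' ≤ 1)
    (hc : c ≤ 1) :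
    ((u + u') / 2) ^ 2 ≤
      1 - 2 * (Real.sqrt (1 - u) * Real.sqrt (1 - u')) * c
        + (Real.sqrt (1 - u) * Real.sqrt (1 - u')) ^ 2 := by
  set ρ := Real.sqrt (1 - u) * Real.sqrt (1 - u') with hρdef
  have hρ0 : 0 ≤ ρ := by positivity
  have hρ2 : ρ ^ 2 = (1 - u) * (1 - u') := by
    rw [hρdef, mul_pow, Real.sq_sqrt (by linarith), Real.sq_sqrt (by linarith)]
  have hρle : ρ ≤ 1 - (u + u') / 2 := by
    have h1 : ρ ^ 2 ≤ (1 - (u + u') / 2) ^ 2 := by nlinarith [sq_nonneg (u - u')]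
    nlinarith [sq_nonneg (ρ - (1 - (u + u') / 2))]
  nlinarith [mul_le_mul_of_nonneg_left hc hρ0, hρ0]

lemma fac_sq_le_one (N j N' j' : ℕ) : fac N j N' j' ^ 2 ≤ 1 := by
  rw [fac_sq_eq]
  have hu := u_pos N; have hu' := u_pos N'
  have h1 := u_le_one N; have h1' := u_le_one N'
  have hD := aux_D ((2:ℝ)⁻¹ ^ N) ((2:ℝ)⁻¹ ^ N')
    (Real.cos (2 * Real.pi * ((((j':ℝ) + 1/2) / 2 ^ N') - (((j:ℝ) + 1/2) / 2 ^ N))))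
    hu h1 hu' h1' (Real.cos_le_one _)
  have hD0 : (0:ℝ) < 1 - 2 * (Real.sqrt (1 - (2:ℝ)⁻¹ ^ N) * Real.sqrt (1 - (2:ℝ)⁻¹ ^ N')) *
      Real.cos (2 * Real.pi * ((((j':ℝ) + 1/2) / 2 ^ N') - (((j:ℝ) + 1/2) / 2 ^ N)))
      + (Real.sqrt (1 - (2:ℝ)⁻¹ ^ N) * Real.sqrt (1 - (2:ℝ)⁻¹ ^ N')) ^ 2 := by
    nlinarith
  rw [div_le_one hD0]
  nlinarith [sq_nonneg ((2:ℝ)⁻¹ ^ N - (2:ℝ)⁻¹ ^ N')]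

lemma fac_sq_le_A (N j N' j' : ℕ) (hNN' : N ≠ N') : fac N j N' j' ^ 2 ≤ 8 / 9 := by
  rw [fac_sq_eq]
  have hu := u_pos N; have hu' := u_pos N'
  have h1 := u_le_one N; have h1' := u_le_one N'
  have hD := aux_D ((2:ℝ)⁻¹ ^ N) ((2:ℝ)⁻¹ ^ N')
    (Real.cos (2 * Real.pi * ((((j':ℝ) + 1/2) / 2 ^ N') - (((j:ℝ) + 1/2) / 2 ^ N))))
    hu h1 hu' h1' (Real.cos_le_one _)
  have hD0 : (0:ℝ) < 1 - 2 * (Real.sqrt (1 - (2:ℝ)⁻¹ ^ N) * Real.sqrt (1 - (2:ℝ)⁻¹ ^ N')) *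
      Real.cos (2 * Real.pi * ((((j':ℝ) + 1/2) / 2 ^ N') - (((j:ℝ) + 1/2) / 2 ^ N)))
      + (Real.sqrt (1 - (2:ℝ)⁻¹ ^ N) * Real.sqrt (1 - (2:ℝ)⁻¹ ^ N')) ^ 2 := by
    nlinarith
  rw [div_le_iff₀ hD0]
  have hhalf : (2:ℝ)⁻¹ ^ N' ≤ (2:ℝ)⁻¹ ^ N / 2 ∨ (2:ℝ)⁻¹ ^ N ≤ (2:ℝ)⁻¹ ^ N' / 2 := by
    rcases hNN'.lt_or_gt with h | h
    · left
      calc (2:ℝ)⁻¹ ^ N' ≤ (2:ℝ)⁻¹ ^ (N + 1) :=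
            pow_le_pow_of_le_one (by norm_num) (by norm_num) h
        _ = (2:ℝ)⁻¹ ^ N / 2 := by rw [pow_succ]; ring
    · right
      calc (2:ℝ)⁻¹ ^ N ≤ (2:ℝ)⁻¹ ^ (N' + 1) :=
            pow_le_pow_of_le_one (by norm_num) (by norm_num) h
        _ = (2:ℝ)⁻¹ ^ N' / 2 := by rw [pow_succ]; ring
  rcases hhalf with h | h
  · nlinarith
  · nlinarith

lemma sin_lower (s u : ℝ) (hu : 0 < u) (hu2 : u ≤ 1/2) (hs1 : u ≤ s) (hs2 : s ≤ 1 - u) :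
    2 * u ≤ Real.sin (Real.pi * s) := by
  rcases le_or_gt s (1/2) with h | h
  · have hx0 : 0 ≤ Real.pi * s := mul_nonneg Real.pi_pos.le (by linarith)
    have hx1 : Real.pi * s ≤ Real.pi / 2 := by nlinarith [Real.pi_pos]
    have := Real.mul_le_sin hx0 hx1
    have hπ : Real.pi ≠ 0 := Real.pi_ne_zero
    calc 2 * u ≤ 2 * s := by linarith
      _ = 2 / Real.pi * (Real.pi * s) := by field_simp
      _ ≤ Real.sin (Real.pi * s) := this
  · rw [show Real.pi * s = Real.pi - Real.pi * (1 - s) by ring, Real.sin_pi_sub]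
    have hx0 : 0 ≤ Real.pi * (1 - s) :=
      mul_nonneg Real.pi_pos.le (by linarith)
    have hx1 : Real.pi * (1 - s) ≤ Real.pi / 2 := by nlinarith [Real.pi_pos]
    have := Real.mul_le_sin hx0 hx1
    have hπ : Real.pi ≠ 0 := Real.pi_ne_zero
    calc 2 * u ≤ 2 * (1 - s) := by linarith
      _ = 2 / Real.pi * (Real.pi * (1 - s)) := by field_simp
      _ ≤ _ := this

lemma cos_upper (s u : ℝ) (hu : 0 < u) (hu2 : u ≤ 1/2) (hs1 : u ≤ s) (hs2 : s ≤ 1 - u) :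
    Real.cos (2 * Real.pi * s) ≤ 1 - 8 * u ^ 2 := by
  have hsin := sin_lower s u hu hu2 hs1 hs2
  have h1 := Real.cos_two_mul (Real.pi * s)
  have h2 := Real.sin_sq_add_cos_sq (Real.pi * s)
  have : Real.cos (2 * Real.pi * s) = 1 - 2 * Real.sin (Real.pi * s) ^ 2 := by
    rw [show 2 * Real.pi * s = 2 * (Real.pi * s) by ring, h1]; linarith
  rw [this]
  nlinarith

lemma fac_sq_le_B (N j j' : ℕ) (hj : j < 2 ^ N) (hj' : j' < 2 ^ N) (hjj : j ≠ j') :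
    fac N j N j' ^ 2 ≤ 8 / 9 := by
  rw [fac_sq_eq]
  set u := (2:ℝ)⁻¹ ^ N with hudef
  have hu := u_pos N
  have h1 := u_le_one N
  have hρ : Real.sqrt (1 - u) * Real.sqrt (1 - u) = 1 - u :=
    Real.mul_self_sqrt (by linarith)
  have hN : 1 ≤ N := by
    rcases Nat.eq_zero_or_pos N with h | h
    · subst h; simp at hj hj'; omega
    · exact h
  have hu2 : u ≤ 1/2 := by
    calc u ≤ (2:ℝ)⁻¹ ^ 1 := pow_le_pow_of_le_one (by norm_num) (by norm_num) hN
      _ = 1/2 := by norm_num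
  -- the angle
  have h2N : (0:ℝ) < 2 ^ N := by positivity
  have huinv : u = ((2:ℝ) ^ N)⁻¹ := by rw [hudef, inv_pow]
  set s := |((j':ℝ) - j)| / 2 ^ N with hsdef
  have hcancel : ((2:ℝ) ^ N)⁻¹ * 2 ^ N = 1 := inv_mul_cancel₀ (ne_of_gt h2N)
  have hs1 : u ≤ s := by
    have habs1 : (1:ℝ) ≤ |((j':ℝ) - j)| := by
      have hz : ((j':ℤ) - j) ≠ 0 := sub_ne_zero.mpr (by exact_mod_cast hjj.symm)
      have := Int.one_le_abs hz
      have : ((1:ℤ):ℝ) ≤ ((|(j':ℤ) - j| : ℤ) : ℝ) := by exact_mod_cast this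
      push_cast at this
      convert this using 2 <;> push_cast <;> ring
    rw [hsdef, huinv, le_div_iff₀ h2N]
    nlinarith
  have hs2 : s ≤ 1 - u := by
    have hj1 : (j:ℝ) ≤ 2 ^ N - 1 := by
      have : (j:ℝ) + 1 ≤ (2:ℝ) ^ N := by exact_mod_cast Nat.succ_le_of_lt hj
      linarith
    have hj2 : (j':ℝ) ≤ 2 ^ N - 1 := by
      have : (j':ℝ) + 1 ≤ (2:ℝ) ^ N := by exact_mod_cast Nat.succ_le_of_lt hj'
      linarith
    have habs : |((j':ℝ) - j)| ≤ 2 ^ N - 1 := by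
      rw [abs_le]
      constructor <;> nlinarith [Nat.cast_nonneg (α := ℝ) j, Nat.cast_nonneg (α := ℝ) j']
    rw [hsdef, huinv, div_le_iff₀ h2N]
    nlinarith [hcancel]
  have hangle : Real.cos (2 * Real.pi * ((((j':ℝ) + 1/2) / 2 ^ N) - (((j:ℝ) + 1/2) / 2 ^ N)))
      = Real.cos (2 * Real.pi * s) := by
    rw [show (2 * Real.pi * ((((j':ℝ) + 1/2) / 2 ^ N) - (((j:ℝ) + 1/2) / 2 ^ N)))
        = 2 * Real.pi * (((j':ℝ) - j) / 2 ^ N) by ring]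
    rw [← Real.cos_abs]
    rw [show |2 * Real.pi * (((j':ℝ) - j) / 2 ^ N)| = 2 * Real.pi * (|((j':ℝ) - j)| / 2 ^ N) by
      rw [abs_mul, abs_div, _root_.abs_of_nonneg (le_of_lt h2N),
        _root_.abs_of_nonneg Real.two_pi_pos.le]]
  rw [hangle, hρ]
  have hcos := cos_upper s u hu hu2 hs1 hs2
  have hD0 : (0:ℝ) < 1 - 2 * (1 - u) * Real.cos (2 * Real.pi * s) + (1 - u) ^ 2 := by
    nlinarith [Real.cos_le_one (2 * Real.pi * s)]
  rw [div_le_iff₀ hD0]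
  nlinarith

lemma fac_sq_le (N j N' j' : ℕ) (hj : j < 2 ^ N) (hj' : j' < 2 ^ N')
    (h : ¬(N = N' ∧ j = j')) : fac N j N' j' ^ 2 ≤ 8 / 9 := by
  by_cases hN : N = N'
  · subst hN
    exact fac_sq_le_B N j j' hj hj' (fun hc => h ⟨rfl, hc⟩)
  · exact fac_sq_le_A N j N' j' hN


/-- There is `γ ∈ (0,1)` such that the points associated to any two distinct
dyadic rectangles in `[0,1)²` satisfy `|⟨g_{z_R}, g_{z_{R'}}⟩|² ≤ 1 - γ²`:
the collection `{z_R}` is weakly separated with a uniform constant. -/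
theorem statement16 :
    ∃ γ : ℝ, 0 < γ ∧ γ < 1 ∧
      ∀ N₁ j₁ N₂ j₂ N₁' j₁' N₂' j₂' : ℕ,
        j₁ < 2 ^ N₁ → j₂ < 2 ^ N₂ → j₁' < 2 ^ N₁' → j₂' < 2 ^ N₂' →
        (N₁, j₁, N₂, j₂) ≠ (N₁', j₁', N₂', j₂') →
        gInnerAbs 2 (zRect N₁ j₁ N₂ j₂) (zRect N₁' j₁' N₂' j₂') ^ 2 ≤ 1 - γ ^ 2 := by
  refine ⟨1/3, by norm_num, by norm_num, ?_⟩
  intro N₁ j₁ N₂ j₂ N₁' j₁' N₂' j₂' hj₁ hj₂ hj₁' hj₂' hne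
  have hprod : gInnerAbs 2 (zRect N₁ j₁ N₂ j₂) (zRect N₁' j₁' N₂' j₂')
      = fac N₁ j₁ N₁' j₁' * fac N₂ j₂ N₂' j₂' := by
    simp [gInnerAbs, Fin.prod_univ_two, zRect, fac, zc]
    ring
  rw [hprod, mul_pow]
  have h89 : (1:ℝ) - (1/3)^2 = 8/9 := by norm_num
  rw [h89]
  by_cases h1 : N₁ = N₁' ∧ j₁ = j₁'
  · have h2 : ¬(N₂ = N₂' ∧ j₂ = j₂') := by
      rintro ⟨rfl, rfl⟩
      obtain ⟨rfl, rfl⟩ := h1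
      exact hne rfl
    calc fac N₁ j₁ N₁' j₁' ^ 2 * fac N₂ j₂ N₂' j₂' ^ 2
        ≤ 1 * (8/9) :=
          mul_le_mul (fac_sq_le_one _ _ _ _) (fac_sq_le _ _ _ _ hj₂ hj₂' h2)
            (sq_nonneg _) (by norm_num)
      _ = 8/9 := by norm_num
  · calc fac N₁ j₁ N₁' j₁' ^ 2 * fac N₂ j₂ N₂' j₂' ^ 2
        ≤ (8/9) * 1 :=
          mul_le_mul (fac_sq_le _ _ _ _ hj₁ hj₁' h1) (fac_sq_le_one _ _ _ _)
            (sq_nonneg _) (by norm_num)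
      _ = 8/9 := by norm_num
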